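/- (Forced structure of perfect matchings in G.) In every perfect matching M of the constructed graph G: every vertex of A_i is matched to a vertex of Bset_i (for each 1 ≤ i ≤ s); every vertex of W_j is matched to a vertex of B_j (for each 1 ≤ j ≤ t); consequently, for each j, at least β_j and at most β'_j of the s vertices of B_j are matched to vertices of ⋃_i (A_i ∪ A'_i), and for each i, at least α_i and at most α'_i of the vertices of Bset_i are matched to vertices of A_i ∪ A'_i. -/

import Mathlib

open Finset

section Construction

variable {s t : ℕ}

/-- The left part `S` of the constructed complete bipartite graph `G`:
`A_i` (`α i` copies of `a_i`), `A'_i` (`α' i − α i` copies of `a_i`),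
the dummy sets `X_j` (`β' j − β j` vertices) and `W_j` (`s − β' j` vertices). -/
abbrev LeftV (s t : ℕ) (α α' : Fin s → ℕ) (β β' : Fin t → ℕ) : Type :=
  ((Σ i : Fin s, Fin (α i)) ⊕ (Σ i : Fin s, Fin (α' i - α i))) ⊕
  ((Σ j : Fin t, Fin (β' j - β j)) ⊕ (Σ j : Fin t, Fin (s - β' j)))

/-- The right part `T` of the constructed graph: the sets `Bset_i` (vertex `(i, j)`
is the copy `b_{ji}` of `b_j` lying in `Bset_i`; thus `B_j = {(i, j) : i}`) together
with the compensator set `Y` of `Σ_i α'_i − Σ_j β_j` dummy vertices. -/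
abbrev RightV (s t : ℕ) (α' : Fin s → ℕ) (β : Fin t → ℕ) : Type :=
  (Fin s × Fin t) ⊕ Fin (∑ i, α' i - ∑ j, β j)

variable {α α' : Fin s → ℕ} {β β' : Fin t → ℕ}

/-- Adjacency in the constructed graph `G`: each vertex of `A_i ∪ A'_i` is joined to every
vertex of `Bset_i`; each vertex of `A'_i` is joined to every vertex of `Y`; each vertex of
`X_j` is joined to every vertex of `B_j` and to every vertex of `Y`; each vertex of `W_j`
is joined to every vertex of `B_j`. -/
def Adj : LeftV s t α α' β β' → RightV s t α' β → Prop
  | .inl (.inl ⟨i, _⟩), .inl (i', _) => i' = i       -- A_i — Bset_i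
  | .inl (.inl _), .inr _ => False
  | .inl (.inr ⟨i, _⟩), .inl (i', _) => i' = i       -- A'_i — Bset_i
  | .inl (.inr _), .inr _ => True                     -- A'_i — Y
  | .inr (.inl ⟨j, _⟩), .inl (_, j') => j' = j       -- X_j — B_j
  | .inr (.inl _), .inr _ => True                     -- X_j — Y
  | .inr (.inr ⟨j, _⟩), .inl (_, j') => j' = j       -- W_j — B_j
  | .inr (.inr _), .inr _ => False

/-- Edge weights of the constructed graph `G`. -/
def wt (δ : Fin s → Fin t → ℝ) (γ' γ'' : ℝ) : LeftV s t α α' β β' → RightV s t α' β → ℝ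
  | .inl _, .inl (i, j) => δ i j     -- main edges into b_{ji}
  | .inl (.inl _), .inr _ => 0
  | .inl (.inr _), .inr _ => γ'      -- A'_i — Y
  | .inr (.inl _), .inl _ => γ'      -- X_j — B_j
  | .inr (.inl _), .inr _ => γ''     -- X_j — Y
  | .inr (.inr _), _ => 0            -- W_j — B_j

/-- An edge is a main edge when it joins `⋃_i (A_i ∪ A'_i)` to `⋃_i Bset_i`. -/
def IsMainEdge : LeftV s t α α' β β' → RightV s t α' β → Bool
  | .inl _, .inl _ => true
  | _, _ => false

/-- A perfect matching of `G` is a bijection between the two parts all of whose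
pairs are edges of `G`. -/
def IsPM (M : LeftV s t α α' β β' ≃ RightV s t α' β) : Prop :=
  ∀ v, Adj v (M v)

/-- `Weight(M)`, the total weight of a perfect matching. -/
noncomputable def totalWeight (δ : Fin s → Fin t → ℝ) (γ' γ'' : ℝ)
    (M : LeftV s t α α' β β' ≃ RightV s t α' β) : ℝ :=
  ∑ v, wt δ γ' γ'' v (M v)

/-- `Weight(Main(M))`, the total weight of the main edges of `M`. -/
noncomputable def mainWeight (δ : Fin s → Fin t → ℝ) (γ' γ'' : ℝ)
    (M : LeftV s t α α' β β' ≃ RightV s t α' β) : ℝ :=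
  ∑ v ∈ univ.filter (fun v => IsMainEdge v (M v)), wt δ γ' γ'' v (M v)

/-- `|Main(M)|`, the number of main edges of `M`. -/
def mainCount (M : LeftV s t α α' β β' ≃ RightV s t α' β) : ℕ :=
  (univ.filter (fun v => IsMainEdge v (M v))).card

/-- `L ⊆ A × B` is an MMDC between `A` and `B`: each `a_i` lies in at least `α i` and at
most `α' i` pairs, and each `b_j` lies in at least `β j` and at most `β' j` pairs. -/
def IsMMDC (α α' : Fin s → ℕ) (β β' : Fin t → ℕ) (L : Finset (Fin s × Fin t)) : Prop :=
  (∀ i, α i ≤ (L.filter (fun p => p.1 = i)).card ∧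
    (L.filter (fun p => p.1 = i)).card ≤ α' i) ∧
  (∀ j, β j ≤ (L.filter (fun p => p.2 = j)).card ∧
    (L.filter (fun p => p.2 = j)).card ≤ β' j)

/-- `c(L)`, the cost of a matching `L` between `A` and `B`. -/
noncomputable def cost (δ : Fin s → Fin t → ℝ) (L : Finset (Fin s × Fin t)) : ℝ :=
  ∑ p ∈ L, δ p.1 p.2

end Construction

/-- **forced structure of perfect matchings in `G`.** In every perfect
matching `M` of the constructed graph `G`: every vertex of `A_i` is matched to a vertex
of `Bset_i`; every vertex of `W_j` is matched to a vertex of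
`B_j = {b_{ji} = (i, j) : 1 ≤ i ≤ s}`; consequently, for each `j`, at least `β j` and at
most `β' j` of the `s` vertices of `B_j` are matched to vertices of `⋃_i (A_i ∪ A'_i)`
(i.e. their partner under `M` lies in the left main blocks), and for each `i`, at least
`α i` and at most `α' i` of the vertices of `Bset_i` are matched to vertices of
`A_i ∪ A'_i`. -/
theorem pm_forced_structure {s t : ℕ} (α α' : Fin s → ℕ) (β β' : Fin t → ℕ)
    (δ : Fin s → Fin t → ℝ) (γ' γ'' : ℝ)
    (hs : 1 ≤ s) (ht : 1 ≤ t)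
    (hδ0 : ∀ i j, 0 ≤ δ i j)
    (hα1 : ∀ i, 1 ≤ α i) (hαα : ∀ i, α i ≤ α' i) (hα't : ∀ i, α' i ≤ t)
    (hβ1 : ∀ j, 1 ≤ β j) (hββ : ∀ j, β j ≤ β' j) (hβ's : ∀ j, β' j ≤ s)
    (hsum : ∑ j, β j ≤ ∑ i, α' i)
    (hγ' : ∀ i j, δ i j < γ') (hγ'' : γ' < γ'')
    (M : LeftV s t α α' β β' ≃ RightV s t α' β) (hM : IsPM M) :
    (∀ (i : Fin s) (k : Fin (α i)), ∃ j : Fin t,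
        M (Sum.inl (Sum.inl ⟨i, k⟩)) = Sum.inl (i, j)) ∧
    (∀ (j : Fin t) (k : Fin (s - β' j)), ∃ i : Fin s,
        M (Sum.inr (Sum.inr ⟨j, k⟩)) = Sum.inl (i, j)) ∧
    (∀ j : Fin t,
        β j ≤ (univ.filter (fun i : Fin s => (M.symm (Sum.inl (i, j))).isLeft)).card ∧
        (univ.filter (fun i : Fin s => (M.symm (Sum.inl (i, j))).isLeft)).card ≤ β' j) ∧
    (∀ i : Fin s,
        α i ≤ (univ.filter (fun j : Fin t => (M.symm (Sum.inl (i, j))).isLeft)).card ∧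
        (univ.filter (fun j : Fin t => (M.symm (Sum.inl (i, j))).isLeft)).card ≤ α' i) := by
  classical
  have hMs : ∀ x, Adj (M.symm x) x := by
    intro x
    have := hM (M.symm x)
    rwa [Equiv.apply_symm_apply] at this
  have part1 : ∀ (i : Fin s) (k : Fin (α i)), ∃ j : Fin t,
      M (Sum.inl (Sum.inl ⟨i, k⟩)) = Sum.inl (i, j) := by
    intro i k
    have h := hM (Sum.inl (Sum.inl ⟨i, k⟩))
    rcases hMv : M (Sum.inl (Sum.inl ⟨i, k⟩)) with ⟨i', j⟩ | y
    · rw [hMv] at h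
      have hi : i' = i := h
      subst hi
      exact ⟨j, rfl⟩
    · rw [hMv] at h
      exact absurd h (by simp [Adj])
  have part2 : ∀ (j : Fin t) (k : Fin (s - β' j)), ∃ i : Fin s,
      M (Sum.inr (Sum.inr ⟨j, k⟩)) = Sum.inl (i, j) := by
    intro j k
    have h := hM (Sum.inr (Sum.inr ⟨j, k⟩))
    rcases hMv : M (Sum.inr (Sum.inr ⟨j, k⟩)) with ⟨i, j'⟩ | y
    · rw [hMv] at h
      have hj : j' = j := h
      subst hj
      exact ⟨i, rfl⟩
    · rw [hMv] at h
      exact absurd h (by simp [Adj])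
  refine ⟨part1, part2, ?_, ?_⟩
  · intro j
    set P := univ.filter (fun i : Fin s => (M.symm (Sum.inl (i, j))).isLeft) with hP
    set Q := univ.filter (fun i : Fin s => ¬ (M.symm (Sum.inl (i, j))).isLeft) with hQ
    have hPQ : P.card + Q.card = s := by
      rw [hP, hQ, Finset.card_filter_add_card_filter_not]
      simp
    -- upper bound on Q via encoding into range (s - β j)
    have hQle : Q.card ≤ s - β j := by
      have := Finset.card_le_card_of_injOn
        (f := fun i : Fin s => Sum.elim (fun _ => (0 : ℕ))
          (Sum.elim (fun p => (p.2 : ℕ)) (fun p => (β' j - β j) + (p.2 : ℕ)))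
          (M.symm (Sum.inl (i, j))))
        (s := Q) (t := Finset.range (s - β j)) ?_ ?_
      · simpa using this
      · intro i hi
        have hi' : ¬ (M.symm (Sum.inl (i, j))).isLeft := by
          simpa [hQ] using hi
        have hadj := hMs (Sum.inl (i, j))
        rcases h : M.symm (Sum.inl (i, j)) with l | (⟨j1, k⟩ | ⟨j1, k⟩)
        · rw [h] at hi'; simp at hi'
        · rw [h] at hadj
          have hj1 : j = j1 := hadj
          subst hj1
          have hk := k.isLt
          simp only [h, Sum.elim_inl, Sum.elim_inr, Finset.mem_coe, Finset.mem_range]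
          have := hβ's j
          have := hββ j
          omega
        · rw [h] at hadj
          have hj1 : j = j1 := hadj
          subst hj1
          have hk := k.isLt
          simp only [h, Sum.elim_inl, Sum.elim_inr, Finset.mem_coe, Finset.mem_range]
          have := hβ's j
          have := hββ j
          omega
      · intro i1 h1 i2 h2 hf
        have hi1 : ¬ (M.symm (Sum.inl (i1, j))).isLeft := by simpa [hQ] using h1
        have hi2 : ¬ (M.symm (Sum.inl (i2, j))).isLeft := by simpa [hQ] using h2
        have hadj1 := hMs (Sum.inl (i1, j))
        have hadj2 := hMs (Sum.inl (i2, j))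
        have key : M.symm (Sum.inl (i1, j)) = M.symm (Sum.inl (i2, j)) := by
          rcases e1 : M.symm (Sum.inl (i1, j)) with l | (⟨j1, k1⟩ | ⟨j1, k1⟩) <;>
            rcases e2 : M.symm (Sum.inl (i2, j)) with l2 | (⟨j2, k2⟩ | ⟨j2, k2⟩)
          all_goals first
            | (rw [e1] at hi1; simp at hi1; done)
            | (rw [e2] at hi2; simp at hi2; done)
            | (rw [e1] at hadj1; rw [e2] at hadj2
               have hjj1 : j = j1 := hadj1
               have hjj2 : j = j2 := hadj2
               subst hjj1; subst hjj2
               simp only at hf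
               rw [e1, e2] at hf
               simp only [Sum.elim_inl, Sum.elim_inr] at hf
               have hk1 := k1.isLt
               have hk2 := k2.isLt
               first
                 | (simp only [Sum.inr.injEq, Sum.inl.injEq, Sigma.mk.inj_iff, heq_eq_eq, eq_self_iff_true, and_true,
                      true_and, Fin.ext_iff]
                    omega)
                 | exact absurd hf (by omega))
        have := M.symm.injective key
        simpa using this
    have hQge : s - β' j ≤ Q.card := by
      have hg : ∀ k : Fin (s - β' j), M (Sum.inr (Sum.inr ⟨j, k⟩)) =
          Sum.inl ((part2 j k).choose, j) := fun k => (part2 j k).choose_spec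
      have := Finset.card_le_card_of_injOn
        (f := fun k : Fin (s - β' j) => (part2 j k).choose)
        (s := Finset.univ) (t := Q) ?_ ?_
      · simpa using this
      · intro k _
        have hsymm : M.symm (Sum.inl ((part2 j k).choose, j)) = Sum.inr (Sum.inr ⟨j, k⟩) := by
          rw [← hg k, Equiv.symm_apply_apply]
        simp [hQ, hsymm]
      · intro k1 _ k2 _ hk
        have hk' : (part2 j k1).choose = (part2 j k2).choose := hk
        have := M.injective (by rw [hg k1, hg k2, hk'] :
          M (Sum.inr (Sum.inr ⟨j, k1⟩)) = M (Sum.inr (Sum.inr ⟨j, k2⟩)))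
        simpa using this
    have := hβ's j
    have := hββ j
    constructor <;> omega
  · intro i
    set P := univ.filter (fun j : Fin t => (M.symm (Sum.inl (i, j))).isLeft) with hP
    have hub : P.card ≤ α' i := by
      have := Finset.card_le_card_of_injOn
        (f := fun j : Fin t => Sum.elim
          (Sum.elim (fun p => (p.2 : ℕ)) (fun p => α i + (p.2 : ℕ)))
          (fun _ => (0 : ℕ)) (M.symm (Sum.inl (i, j))))
        (s := P) (t := Finset.range (α' i)) ?_ ?_
      · simpa using this
      · intro j hj
        have hj' : (M.symm (Sum.inl (i, j))).isLeft := by simpa [hP] using hj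
        have hadj := hMs (Sum.inl (i, j))
        rcases h : M.symm (Sum.inl (i, j)) with (⟨i1, k⟩ | ⟨i1, k⟩) | r
        · rw [h] at hadj
          have hi1 : i = i1 := hadj
          subst hi1
          have hk := k.isLt
          simp only [h, Sum.elim_inl, Sum.elim_inr, Finset.mem_coe, Finset.mem_range]
          have := hαα i
          omega
        · rw [h] at hadj
          have hi1 : i = i1 := hadj
          subst hi1
          have hk := k.isLt
          simp only [h, Sum.elim_inl, Sum.elim_inr, Finset.mem_coe, Finset.mem_range]
          have := hαα i
          omega
        · rw [h] at hj'; simp at hj'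
      · intro j1 h1 j2 h2 hf
        have hj1 : (M.symm (Sum.inl (i, j1))).isLeft := by simpa [hP] using h1
        have hj2 : (M.symm (Sum.inl (i, j2))).isLeft := by simpa [hP] using h2
        have hadj1 := hMs (Sum.inl (i, j1))
        have hadj2 := hMs (Sum.inl (i, j2))
        have key : M.symm (Sum.inl (i, j1)) = M.symm (Sum.inl (i, j2)) := by
          rcases e1 : M.symm (Sum.inl (i, j1)) with (⟨i1, k1⟩ | ⟨i1, k1⟩) | r <;>
            rcases e2 : M.symm (Sum.inl (i, j2)) with (⟨i2, k2⟩ | ⟨i2, k2⟩) | r2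
          all_goals first
            | (rw [e1] at hj1; simp at hj1; done)
            | (rw [e2] at hj2; simp at hj2; done)
            | (rw [e1] at hadj1; rw [e2] at hadj2
               have hjj1 : i = i1 := hadj1
               have hjj2 : i = i2 := hadj2
               subst hjj1; subst hjj2
               simp only at hf
               rw [e1, e2] at hf
               simp only [Sum.elim_inl, Sum.elim_inr] at hf
               have hk1 := k1.isLt
               have hk2 := k2.isLt
               first
                 | (simp only [Sum.inr.injEq, Sum.inl.injEq, Sigma.mk.inj_iff, heq_eq_eq, eq_self_iff_true, and_true,
                      true_and, Fin.ext_iff]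
                    omega)
                 | exact absurd hf (by omega))
        have := M.symm.injective key
        simpa using this
    have hlb : α i ≤ P.card := by
      have hg : ∀ k : Fin (α i), M (Sum.inl (Sum.inl ⟨i, k⟩)) =
          Sum.inl (i, (part1 i k).choose) := fun k => (part1 i k).choose_spec
      have := Finset.card_le_card_of_injOn
        (f := fun k : Fin (α i) => (part1 i k).choose)
        (s := Finset.univ) (t := P) ?_ ?_
      · simpa using this
      · intro k _
        have hsymm : M.symm (Sum.inl (i, (part1 i k).choose)) = Sum.inl (Sum.inl ⟨i, k⟩) := by
          rw [← hg k, Equiv.symm_apply_apply]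
        simp [hP, hsymm]
      · intro k1 _ k2 _ hk
        have hk' : (part1 i k1).choose = (part1 i k2).choose := hk
        have := M.injective (by rw [hg k1, hg k2, hk'] :
          M (Sum.inl (Sum.inl ⟨i, k1⟩)) = M (Sum.inl (Sum.inl ⟨i, k2⟩)))
        simpa using this
    exact ⟨hlb, hub⟩
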